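/- Let D = Dⁿ ∪ Dˣ be a database instance and Q a monotone Boolean query with ¬Q(∅). A tuple t ∈ Dⁿ is an actual cause for Q if and only if DF(D, Dⁿ, κ(Q), t) ≠ ∅. (Proposition 2.) -/

import Mathlib

/-- `t` is an actual cause for query `Q` in instance `D` with endogenous part `Dn`. -/
def IsCause {U : Type*} [DecidableEq U] (D Dn : Finset U) (Q : Finset U → Prop) (t : U) : Prop :=
  t ∈ Dn ∧ ∃ Γ ⊆ Dn, t ∉ Γ ∧ Q (D \ Γ) ∧ ¬ Q (D \ insert t Γ)

/-- `D'` is an S-repair of `D` w.r.t. the denial constraint `κ(Q)`. -/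
def IsSRepair {U : Type*} [DecidableEq U] (D : Finset U) (Q : Finset U → Prop)
    (D' : Finset U) : Prop :=
  D' ⊆ D ∧ ¬ Q D' ∧ ∀ D'' ⊆ D, ¬ Q D'' → D' ⊆ D'' → D'' = D'

/-- `DF(D, Dⁿ, κ(Q), t)`: differences `D ∖ D'` for S-repairs `D'` with `t ∈ D ∖ D' ⊆ Dⁿ`. -/
def DF {U : Type*} [DecidableEq U] (D Dn : Finset U) (Q : Finset U → Prop) (t : U) :
    Set (Finset U) :=
  { s | ∃ D', IsSRepair D Q D' ∧ s = D \ D' ∧ t ∈ s ∧ s ⊆ Dn }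

/-- Proposition 2: `t ∈ Dⁿ` is an actual cause for `Q` iff `DF(D, Dⁿ, κ(Q), t) ≠ ∅`. -/
theorem cause_iff_DF_nonempty
    {U : Type*} [DecidableEq U] (D Dn Dx : Finset U) (Q : Finset U → Prop)
    (hD : D = Dn ∪ Dx) (hdisj : Disjoint Dn Dx)
    (hmono : ∀ S S' : Finset U, S ⊆ S' → Q S → Q S')
    (hempty : ¬ Q ∅)
    (t : U) (ht : t ∈ Dn) :
    IsCause D Dn Q t ↔ DF D Dn Q t ≠ ∅ := by
  have htD : t ∈ D := hD ▸ Finset.mem_union_left _ ht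
  rw [← Set.nonempty_iff_ne_empty]
  constructor
  · rintro ⟨-, Γ, hΓ, htΓ, hQ1, hQ2⟩
    set base := D \ insert t Γ with hbase
    set S : Set (Finset U) := {X | base ⊆ X ∧ X ⊆ D \ {t} ∧ ¬ Q X} with hS
    have hfin : S.Finite := by
      apply (Set.finite_Icc base (D \ {t})).subset
      rintro x ⟨h1, h2, -⟩
      exact ⟨h1, h2⟩
    have hbaseS : base ∈ S := by
      refine ⟨subset_rfl, ?_, hQ2⟩
      exact Finset.sdiff_subset_sdiff subset_rfl (Finset.singleton_subset_iff.2 (Finset.mem_insert_self _ _))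
    obtain ⟨D', hD'S, hmax⟩ : ∃ D' ∈ S, ∀ a' ∈ S, id D' ≤ id a' → id D' = id a' := by
      obtain ⟨D', h1, h2⟩ := hfin.exists_maximalFor id S ⟨base, hbaseS⟩
      exact ⟨D', h1, fun a ha hle => le_antisymm hle (h2 ha hle)⟩
    obtain ⟨hb, hsub, hnQ⟩ := hD'S
    have htD' : t ∉ D' := fun h => (Finset.mem_sdiff.1 (hsub h)).2 (Finset.mem_singleton_self t)
    have hrep : IsSRepair D Q D' := by
      refine ⟨hsub.trans (Finset.sdiff_subset), hnQ, ?_⟩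
      intro D'' hD'' hnQ'' hle
      have ht'' : t ∉ D'' := by
        intro htt
        apply hnQ''
        apply hmono (D \ Γ) D''
        · intro x hx
          rcases Finset.mem_sdiff.1 hx with ⟨hxD, hxΓ⟩
          by_cases hxt : x = t
          · exact hxt ▸ htt
          · exact hle (hb (Finset.mem_sdiff.2 ⟨hxD, fun hm =>
              (Finset.mem_insert.1 hm).elim hxt hxΓ⟩))
        · exact hQ1
      have : D'' ∈ S := ⟨hb.trans hle, fun x hx => Finset.mem_sdiff.2
        ⟨hD'' hx, fun hxt => ht'' ((Finset.mem_singleton.1 hxt) ▸ hx)⟩, hnQ''⟩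
      exact (hmax D'' this hle).symm
    refine ⟨D \ D', D', hrep, rfl, Finset.mem_sdiff.2 ⟨htD, htD'⟩, ?_⟩
    intro x hx
    rcases Finset.mem_sdiff.1 hx with ⟨hxD, hxD'⟩
    rcases Finset.mem_union.1 (hD ▸ hxD) with h | h
    · exact h
    · exfalso
      apply hxD'
      apply hb
      refine Finset.mem_sdiff.2 ⟨hxD, fun hm => ?_⟩
      have : x ∈ Dn := by
        rcases Finset.mem_insert.1 hm with h' | h'
        · exact h' ▸ ht
        · exact hΓ h'
      exact (Finset.disjoint_left.1 hdisj) this h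
  · rintro ⟨s, D', ⟨hD'D, hnQ, hmax⟩, rfl, hts, hsDn⟩
    rcases Finset.mem_sdiff.1 hts with ⟨-, htD'⟩
    refine ⟨ht, (D \ D').erase t, fun x hx => hsDn (Finset.erase_subset _ _ hx),
      Finset.notMem_erase _ _, ?_, ?_⟩
    · have heq : D \ (D \ D').erase t = insert t D' := by
        ext x
        simp only [Finset.mem_sdiff, Finset.mem_erase, Finset.mem_insert]
        constructor
        · rintro ⟨hxD, hx⟩
          by_cases hxt : x = t
          · exact Or.inl hxt
          · by_contra hc
            push_neg at hc
            exact hx ⟨hxt, hxD, fun h => hc.2 h⟩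
        · rintro (rfl | hx)
          · exact ⟨htD, fun h => h.1 rfl⟩
          · exact ⟨hD'D hx, fun h => h.2.2 hx⟩
      rw [heq]
      by_contra hc
      have := hmax (insert t D') (Finset.insert_subset htD hD'D) hc
        (Finset.subset_insert _ _)
      exact htD' (this ▸ Finset.mem_insert_self t D')
    · have : insert t ((D \ D').erase t) = D \ D' := Finset.insert_erase hts
      rw [this, Finset.sdiff_sdiff_eq_self hD'D]
      exact hnQ
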